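/- Let q > 2 be a prime number. For every complex number s with Re(s) > 1, the Dirichlet series of λ_q satisfies L(s, λ_q) = ζ(qs) · ∏_p ( 1 + ∑_{m=2}^{q-1} (m/q) · p^{-(m-1)s} ), where the product runs over all prime numbers p. -/

import Mathlib

set_option maxHeartbeats 1000000


open Filter

/-- `λ_q(n) = (τ(n)/q)` : the Legendre symbol mod `q` of the number of divisors of `n`. -/
noncomputable def lamq (q : ℕ) [Fact q.Prime] (n : ℕ) : ℂ :=
  (legendreSym q (n.divisors.card : ℤ) : ℂ)

section aux
variable (q : ℕ) [Fact q.Prime]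

lemma legendre_norm_le (a : ℤ) : ‖(legendreSym q a : ℂ)‖ ≤ 1 := by
  by_cases h : (a : ZMod q) = 0
  · rw [(legendreSym.eq_zero_iff q a).mpr h]; simp
  · rcases legendreSym.eq_one_or_neg_one q h with h1 | h1 <;> rw [h1] <;> simp

lemma term_prime_pow {p : ℕ} (hp : p.Prime) (s : ℂ) (e : ℕ) :
    LSeries.term (lamq q) s (p ^ e)
      = (legendreSym q ((e + 1 : ℕ) : ℤ) : ℂ) * ((p : ℂ) ^ (-s)) ^ e := by
  rw [LSeries.term_of_ne_zero (pow_ne_zero e hp.pos.ne'), lamq]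
  rw [Nat.divisors_prime_pow hp, Finset.card_map, Finset.card_range]
  rw [Nat.cast_pow, ← Complex.natCast_cpow_natCast_mul,
    div_eq_mul_inv, ← Complex.cpow_neg, ← mul_neg, Complex.cpow_nat_mul]

lemma cpow_eq_pow (p : ℕ) (s : ℂ) (k : ℕ) :
    (p : ℂ) ^ (-((k : ℂ) * s)) = ((p : ℂ) ^ (-s)) ^ k := by
  rw [← mul_neg, Complex.cpow_nat_mul]

lemma local_factor (hq : 2 < q) {p : ℕ} (hp : p.Prime) {s : ℂ} (hs : 1 < s.re) :
    ∑' e : ℕ, LSeries.term (lamq q) s (p ^ e)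
      = (1 - (p : ℂ) ^ (-((q : ℂ) * s)))⁻¹ *
        (1 + ∑ m ∈ Finset.Icc 2 (q - 1),
          (legendreSym q (m : ℤ) : ℂ) * (p : ℂ) ^ (-(((m : ℂ) - 1) * s))) := by
  haveI : NeZero q := ⟨(Fact.out : q.Prime).pos.ne'⟩
  set x : ℂ := (p : ℂ) ^ (-s) with hxdef
  have hnx : ‖x‖ < 1 := by
    rw [hxdef, Complex.norm_natCast_cpow_of_re_ne_zero p (by simp; linarith)]
    apply Real.rpow_lt_one_of_one_lt_of_neg (by exact_mod_cast hp.one_lt)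
    simp; linarith
  set f : ℕ → ℂ := fun e => (legendreSym q ((e + 1 : ℕ) : ℤ) : ℂ) * x ^ e with hfdef
  have hsumf : Summable f := by
    apply Summable.of_norm_bounded (summable_geometric_of_lt_one (norm_nonneg x) hnx)
    intro e
    rw [hfdef, norm_mul, norm_pow]
    exact mul_le_of_le_one_left (by positivity) (legendre_norm_le q _)
  have hperiod : ∀ (t : ℕ) (d : Fin q), f (t * q + (d : ℕ)) =
      ((legendreSym q (((d : ℕ) + 1 : ℕ) : ℤ) : ℂ) * x ^ (d : ℕ)) * (x ^ q) ^ t := by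
    intro t d
    simp only [hfdef]
    have hχ : legendreSym q ((t * q + (d : ℕ) + 1 : ℕ) : ℤ)
        = legendreSym q (((d : ℕ) + 1 : ℕ) : ℤ) := by
      push_cast
      rw [legendreSym.mod, show ((t : ℤ) * q + d + 1) = ((d : ℤ) + 1) + q * t by ring,
        Int.add_mul_emod_self_left, ← legendreSym.mod]
    rw [hχ, pow_add, pow_mul]
    ring
  have key : ∑' e, f e = (1 - x ^ q)⁻¹ *
      ∑ d ∈ Finset.range q, (legendreSym q ((d + 1 : ℕ) : ℤ) : ℂ) * x ^ d := by
    have e1 := Equiv.tsum_eq (Nat.divModEquiv q).symm f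
    have hsum2 : Summable (fun td : ℕ × Fin q => f ((Nat.divModEquiv q).symm td)) :=
      (Equiv.summable_iff (Nat.divModEquiv q).symm).mpr hsumf
    rw [← e1, Summable.tsum_prod hsum2]
    have inner : ∀ t : ℕ, ∑' d : Fin q, f ((Nat.divModEquiv q).symm (t, d))
        = (∑ d ∈ Finset.range q, (legendreSym q ((d + 1 : ℕ) : ℤ) : ℂ) * x ^ d) * (x ^ q) ^ t := by
      intro t
      rw [tsum_fintype]
      simp only [Nat.divModEquiv_symm_apply]
      have step : ∑ d : Fin q, f (t * q + (d : ℕ)) =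
          ∑ d : Fin q, ((legendreSym q (((d : ℕ) + 1 : ℕ) : ℤ) : ℂ) * x ^ (d : ℕ)) * (x ^ q) ^ t :=
        Finset.sum_congr rfl fun d _ => hperiod t d
      rw [step, ← Finset.sum_mul, ← Fin.sum_univ_eq_sum_range
        (fun d => (legendreSym q ((d + 1 : ℕ) : ℤ) : ℂ) * x ^ d) q]
    simp_rw [inner]
    have hxq : ‖x ^ q‖ < 1 := by
      rw [norm_pow]
      exact pow_lt_one₀ (norm_nonneg x) hnx (by omega)
    rw [tsum_mul_left, tsum_geometric_of_norm_lt_one hxq]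
    ring
  have hterms : ∀ e : ℕ,
      LSeries.term (lamq q) s (p ^ e) = f e :=
    fun e => term_prime_pow q hp s e
  rw [tsum_congr hterms, key]
  have hq1 : (p : ℂ) ^ (-((q : ℂ) * s)) = x ^ q := cpow_eq_pow p s q
  have hIco : Finset.Ico 2 q = Finset.Icc 2 (q - 1) := by
    ext a
    simp only [Finset.mem_Ico, Finset.mem_Icc]
    omega
  have hS : ∑ d ∈ Finset.range q, (legendreSym q ((d + 1 : ℕ) : ℤ) : ℂ) * x ^ d
      = 1 + ∑ m ∈ Finset.Icc 2 (q - 1),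
          (legendreSym q (m : ℤ) : ℂ) * (p : ℂ) ^ (-(((m : ℂ) - 1) * s)) := by
    rw [Finset.range_eq_Ico, Finset.sum_eq_sum_Ico_succ_bot (by omega)]
    congr 1
    · norm_num [legendreSym.at_one]
    · have h2 : ∑ d ∈ Finset.Ico 1 q, (legendreSym q ((d + 1 : ℕ) : ℤ) : ℂ) * x ^ d
          = ∑ m ∈ Finset.Ico 2 (q + 1), (legendreSym q (m : ℤ) : ℂ) * x ^ (m - 1) := by
        refine Finset.sum_nbij' (fun d => d + 1) (fun m => m - 1) ?_ ?_ ?_ ?_ ?_ <;>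
          intro a ha <;> simp only [Finset.mem_Ico] at * <;> try omega
        have : ((a + 1 : ℕ) : ℤ) = ((a + 1 : ℕ) : ℤ) := rfl
        norm_num
      rw [h2, Finset.sum_Ico_succ_top (by omega), hIco]
      have hzero : (legendreSym q ((q : ℕ) : ℤ) : ℂ) = 0 := by
        rw [(legendreSym.eq_zero_iff q _).mpr (by push_cast; exact ZMod.natCast_self q)]
        simp
      rw [hzero, zero_mul, add_zero]
      refine Finset.sum_congr rfl fun m hm => ?_
      have h2m : 2 ≤ m := (Finset.mem_Icc.mp hm).1
      rw [← cpow_eq_pow p s (m - 1)]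
      congr 2
      push_cast [Nat.cast_sub (by omega : 1 ≤ m)]
      ring
  rw [hq1, hS]
end aux

theorem dirichlet_series_lamq (q : ℕ) [Fact q.Prime] (hq : 2 < q) (s : ℂ) (hs : 1 < s.re) :
    LSeries (lamq q) s =
      riemannZeta (q * s) *
        ∏' p : Nat.Primes,
          (1 + ∑ m ∈ Finset.Icc 2 (q - 1),
            (legendreSym q (m : ℤ) : ℂ) * ((p : ℕ) : ℂ) ^ (-(((m : ℂ) - 1) * s))) := by
  have hre : 1 < ((q : ℂ) * s).re := by
    have h1 : ((q : ℂ) * s).re = q * s.re := by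
      simp [Complex.mul_re]
    rw [h1]
    have h3 : (1 : ℝ) ≤ (q : ℝ) := by exact_mod_cast (by omega : 1 ≤ q)
    nlinarith
  have hζne : riemannZeta ((q : ℂ) * s) ≠ 0 := riemannZeta_ne_zero_of_one_lt_re hre
  set F : ℕ → ℂ := fun n => LSeries.term (lamq q) s n with hF
  have hf0 : F 0 = 0 := LSeries.term_zero _ _
  have hf1 : F 1 = 1 := by
    rw [hF]
    simp only [LSeries.term_of_ne_zero one_ne_zero, lamq]
    norm_num [legendreSym.at_one]
  have hmul : ∀ {m n : ℕ}, Nat.Coprime m n → F (m * n) = F m * F n := by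
    intro m n hmn
    rcases eq_or_ne m 0 with rfl | hm
    · have hn1 : n = 1 := by simpa using hmn
      subst hn1
      simp [hf0, hf1]
    rcases eq_or_ne n 0 with rfl | hn
    · have hm1 : m = 1 := by simpa using hmn
      subst hm1
      simp [hf0, hf1]
    · rw [hF]
      simp only [LSeries.term_of_ne_zero (mul_ne_zero hm hn), LSeries.term_of_ne_zero hm,
        LSeries.term_of_ne_zero hn, lamq]
      rw [hmn.card_divisors_mul]
      push_cast
      rw [legendreSym.mul, Complex.natCast_mul_natCast_cpow]
      push_cast
      rw [div_mul_div_comm]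
  have hsum : Summable (fun n => ‖F n‖) := by
    have h0 : Summable (fun n : ℕ => ((n : ℝ) ^ s.re)⁻¹) :=
      Real.summable_nat_rpow_inv.mpr hs
    refine Summable.of_nonneg_of_le (fun n => norm_nonneg _) (fun n => ?_) h0
    rw [hF, LSeries.norm_term_eq]
    split
    · positivity
    · rw [div_eq_mul_inv]
      refine mul_le_of_le_one_left (by positivity) ?_
      exact legendre_norm_le q _
  have hEuler : HasProd (fun p : Nat.Primes => ∑' e : ℕ, F ((p : ℕ) ^ e)) (∑' n, F n) :=
    EulerProduct.eulerProduct_hasProd hf1 hmul hsum hf0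
  have hZ : HasProd (fun p : Nat.Primes => (1 - ((p : ℕ) : ℂ) ^ (-((q : ℂ) * s)))⁻¹)
      (riemannZeta ((q : ℂ) * s)) := riemannZeta_eulerProduct_hasProd hre
  have hne : ∀ p : Nat.Primes, (1 - ((p : ℕ) : ℂ) ^ (-((q : ℂ) * s))) ≠ 0 := by
    intro p
    have hnorm : ‖((p : ℕ) : ℂ) ^ (-((q : ℂ) * s))‖ < 1 := by
      rw [Complex.norm_natCast_cpow_of_re_ne_zero _ (by
        simp only [Complex.neg_re, Complex.mul_re, Complex.natCast_re, Complex.natCast_im,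
          zero_mul, sub_zero, ne_eq, neg_eq_zero, mul_eq_zero, not_or]
        exact ⟨by exact_mod_cast (by omega : q ≠ 0), by intro h0; rw [h0] at hs; norm_num at hs⟩)]
      refine Real.rpow_lt_one_of_one_lt_of_neg (by exact_mod_cast p.2.one_lt) ?_
      simp only [Complex.neg_re]
      linarith
    intro hcon
    have : ((p : ℕ) : ℂ) ^ (-((q : ℂ) * s)) = 1 := by
      have := sub_eq_zero.mp hcon
      exact this.symm
    rw [this] at hnorm
    simp at hnorm
  have hZinv : HasProd (fun p : Nat.Primes => (1 - ((p : ℕ) : ℂ) ^ (-((q : ℂ) * s))))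
      (riemannZeta ((q : ℂ) * s))⁻¹ := by
    have h : Filter.Tendsto
        (fun S : Finset Nat.Primes =>
          ∏ p ∈ S, (1 - ((p : ℕ) : ℂ) ^ (-((q : ℂ) * s)))⁻¹)
        Filter.atTop (nhds (riemannZeta ((q : ℂ) * s))) := hZ
    have h2 := h.inv₀ hζne
    refine h2.congr fun S => ?_
    rw [← Finset.prod_inv_distrib]
    exact Finset.prod_congr rfl fun p _ => inv_inv _
  set P : Nat.Primes → ℂ := fun p =>
    (1 + ∑ m ∈ Finset.Icc 2 (q - 1),
      (legendreSym q (m : ℤ) : ℂ) * ((p : ℕ) : ℂ) ^ (-(((m : ℂ) - 1) * s))) with hP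
  have hlocal : ∀ p : Nat.Primes, (∑' e : ℕ, F ((p : ℕ) ^ e)) =
      (1 - ((p : ℕ) : ℂ) ^ (-((q : ℂ) * s)))⁻¹ * P p := fun p => local_factor q hq p.2 hs
  have hPprod : HasProd P ((∑' n, F n) * (riemannZeta ((q : ℂ) * s))⁻¹) := by
    have h := hEuler.mul hZinv
    have heq : (fun p : Nat.Primes => (∑' e : ℕ, F ((p : ℕ) ^ e)) *
        (1 - ((p : ℕ) : ℂ) ^ (-((q : ℂ) * s)))) = P := by
      funext p
      rw [hlocal p, mul_comm ((1 - ((p : ℕ) : ℂ) ^ (-((q : ℂ) * s)))⁻¹) (P p), mul_assoc,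
        inv_mul_cancel₀ (hne p), mul_one]
    rwa [heq] at h
  have hL : LSeries (lamq q) s = ∑' n, F n := rfl
  rw [hL, hPprod.tprod_eq]
  field_simp
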